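/- Let $A\subset\mathbb{R}^p$ be a strongly $(\mathcal{H}^d,d)$-rectifiable set. Then there is a constant $C$, depending only on $A$, such that for all $x\in\mathbb{R}^p$ and all $r>0$, $\mathcal{H}^d(A\cap B(x,r))< C r^d$, where $B(x,r)$ is the closed ball of radius $r$ centered at $x$. -/

import Mathlib

open MeasureTheory Filter Topology Set
open scoped ENNReal NNReal Topology

noncomputable section

abbrev Euc (n : ℕ) : Type := EuclideanSpace ℝ (Fin n)

noncomputable def rieszEnergy {E : Type*} [EMetricSpace E] [MeasurableSpace E]
    (s : ℝ) (μ : Measure E) : ℝ≥0∞ :=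
  ∫⁻ x, ∫⁻ y, edist x y ^ (-s) ∂μ ∂μ

noncomputable def rieszPotential {E : Type*} [EMetricSpace E] [MeasurableSpace E]
    (s : ℝ) (μ : Measure E) (x : E) : ℝ≥0∞ :=
  ∫⁻ y, edist x y ^ (-s) ∂μ

def BiLipschitzOn {E F : Type*} [PseudoMetricSpace E] [PseudoMetricSpace F]
    (L : ℝ) (φ : E → F) (K : Set E) : Prop :=
  ∀ x ∈ K, ∀ y ∈ K, x ≠ y →
    L⁻¹ * dist x y < dist (φ x) (φ y) ∧ dist (φ x) (φ y) < L * dist x y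

def StronglyRectifiable {p : ℕ} (d : ℕ) (A : Set (Euc p)) : Prop :=
  ∀ ε : ℝ, 0 < ε → ∃ (N : ℕ) (K : Fin N → Set (Euc d)) (φ : Fin N → Euc d → Euc p),
    (∀ i, IsCompact (K i)) ∧
    (∀ i, ∃ L : ℝ, L < 1 + ε ∧ BiLipschitzOn L (φ i) (K i)) ∧
    (∀ i j, i ≠ j → μH[(d:ℝ)] (φ i '' K i ∩ φ j '' K j) = 0) ∧
    dimH (A \ ⋃ i, φ i '' K i) < (d : ℝ≥0∞)

def IsEquilibriumMeasure {E : Type*} [EMetricSpace E] [MeasurableSpace E]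
    (s : ℝ) (A : Set E) (μ : Measure E) : Prop :=
  IsProbabilityMeasure μ ∧ μ Aᶜ = 0 ∧
    ∀ ν : Measure E, IsProbabilityMeasure ν → ν Aᶜ = 0 →
      rieszEnergy s μ ≤ rieszEnergy s ν

noncomputable def fourierMeasure {n : ℕ} (μ : Measure (Euc n)) (ξ : Euc n) : ℂ :=
  ∫ x, Complex.exp (-(2 * Real.pi * (inner ℝ x ξ : ℝ)) * Complex.I) ∂μ

lemma euc_ball_bound (d : ℕ) : ∃ M : ℝ, 0 ≤ M ∧ ∀ (z : Euc d) (ρ : ℝ), 0 ≤ ρ →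
    μH[(d:ℝ)] (Metric.closedBall z ρ) ≤ ENNReal.ofReal (M * ρ ^ d) := by
  set c : ℝ≥0 := (Fintype.card (Fin d) : ℝ≥0) ^ (1 / (2:ℝ≥0∞)).toReal with hc
  refine ⟨(c:ℝ) ^ d * 2 ^ d, by positivity, fun z ρ hρ => ?_⟩
  set e := WithLp.equiv 2 (∀ _ : Fin d, ℝ) with he
  have hg : LipschitzWith c e.symm :=
    (PiLp.antilipschitzWith_ofLp 2 _).to_rightInverse e.right_inv
  have h1 : μH[(d:ℝ)] (Metric.closedBall z ρ)
      = μH[(d:ℝ)] (e.symm '' (e '' Metric.closedBall z ρ)) := by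
    rw [Equiv.symm_image_image]
  have h2 : μH[(d:ℝ)] (e.symm '' (e '' Metric.closedBall z ρ))
      ≤ (c : ℝ≥0∞) ^ (d:ℝ) * μH[(d:ℝ)] (e '' Metric.closedBall z ρ) :=
    hg.hausdorffMeasure_image_le (by positivity) _
  have h3 : e '' Metric.closedBall z ρ ⊆ Metric.closedBall (e z) ρ := by
    rintro y ⟨a, ha, rfl⟩
    simpa [he] using le_trans ((PiLp.lipschitzWith_ofLp 2 _).dist_le_mul a z |>.trans (by simp))
      (Metric.mem_closedBall.1 ha)
  have h4 : (μH[(d:ℝ)] (Metric.closedBall (e z) ρ) : ℝ≥0∞)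
      = ENNReal.ofReal ((2 * ρ) ^ d) := by
    have : (μH[(d:ℝ)] : Measure (∀ _ : Fin d, ℝ)) = volume := by
      have := hausdorffMeasure_pi_real (ι := Fin d)
      simpa using this
    rw [this, Real.volume_pi_closedBall _ hρ, Fintype.card_fin]
  calc μH[(d:ℝ)] (Metric.closedBall z ρ)
      ≤ (c : ℝ≥0∞) ^ (d:ℝ) * μH[(d:ℝ)] (e '' Metric.closedBall z ρ) := h1 ▸ h2
    _ ≤ (c : ℝ≥0∞) ^ (d:ℝ) * μH[(d:ℝ)] (Metric.closedBall (e z) ρ) := by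
        exact mul_le_mul_right (measure_mono h3) _
    _ = (c : ℝ≥0∞) ^ (d:ℝ) * ENNReal.ofReal ((2 * ρ) ^ d) := by rw [h4]
    _ = ENNReal.ofReal ((c:ℝ) ^ d * 2 ^ d * ρ ^ d) := by
        rw [ENNReal.rpow_natCast, ← ENNReal.ofReal_coe_nnreal, ← ENNReal.ofReal_pow (by positivity),
          ← ENNReal.ofReal_mul (by positivity)]
        congr 1; ring

theorem stmt10 {p d : ℕ} {A : Set (Euc p)} (hrect : StronglyRectifiable d A) :
    ∃ C : ℝ, 0 < C ∧ ∀ (x : Euc p) (r : ℝ), 0 < r →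
      μH[(d:ℝ)] (A ∩ Metric.closedBall x r) < ENNReal.ofReal (C * r ^ d) := by
  obtain ⟨N, K, φ, hK, hLip, hdisj, hdim⟩ := hrect 1 one_pos
  obtain ⟨M, hM0, hball⟩ := euc_ball_bound d
  set c1 : ℝ := 2 ^ d * (M * 4 ^ d) with hc1
  have hc1nn : 0 ≤ c1 := by positivity
  refine ⟨N * c1 + 1, by positivity, fun x r hr => ?_⟩
  -- the low-dimensional remainder has measure zero
  have hres : μH[(d:ℝ)] (A \ ⋃ i, φ i '' K i) = 0 := by
    have h := hausdorffMeasure_of_dimH_lt (d := (d : ℝ≥0)) (s := A \ ⋃ i, φ i '' K i)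
      (by exact_mod_cast hdim)
    simpa using h
  -- per-piece bound
  have hi : ∀ i, μH[(d:ℝ)] (φ i '' K i ∩ Metric.closedBall x r)
      ≤ ENNReal.ofReal (c1 * r ^ d) := by
    intro i
    obtain ⟨L, hL2, hbil⟩ := hLip i
    have hL2' : L < 2 := by linarith
    set S := K i ∩ φ i ⁻¹' Metric.closedBall x r with hS
    have hsub : φ i '' K i ∩ Metric.closedBall x r ⊆ φ i '' S := by
      rintro y ⟨⟨a, ha, rfl⟩, hy⟩; exact ⟨a, ⟨ha, hy⟩, rfl⟩
    have hlip : LipschitzOnWith 2 (φ i) S := by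
      apply LipschitzOnWith.of_dist_le_mul
      intro a ha b hb
      rcases eq_or_ne a b with rfl | hab
      · simp
      · have h := (hbil a ha.1 b hb.1 hab).2
        have hd : 0 < dist a b := dist_pos.2 hab
        have : ((2:ℝ≥0):ℝ) = 2 := by norm_num
        rw [this]
        nlinarith
    rcases S.eq_empty_or_nonempty with hE | ⟨z, hz⟩
    · have : φ i '' K i ∩ Metric.closedBall x r ⊆ ∅ := by
        rw [← image_empty (φ i), ← hE]; exact hsub
      calc μH[(d:ℝ)] (φ i '' K i ∩ Metric.closedBall x r) ≤ μH[(d:ℝ)] (∅ : Set (Euc p)) :=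
            measure_mono this
        _ = 0 := measure_empty
        _ ≤ _ := zero_le
    · have hSsub : S ⊆ Metric.closedBall z (4 * r) := by
        intro a ha
        rcases eq_or_ne a z with rfl | haz
        · simp; positivity
        · have h1 := hbil a ha.1 z hz.1 haz
          have hd : 0 < dist a z := dist_pos.2 haz
          have hL0 : 0 < L := by nlinarith [dist_nonneg (x := φ i a) (y := φ i z), h1.2]
          have hφd : dist (φ i a) (φ i z) ≤ 2 * r := by
            have ha' : dist (φ i a) x ≤ r := Metric.mem_closedBall.1 ha.2
            have hz' : dist (φ i z) x ≤ r := Metric.mem_closedBall.1 hz.2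
            calc dist (φ i a) (φ i z) ≤ dist (φ i a) x + dist x (φ i z) := dist_triangle _ _ _
              _ ≤ r + r := by rw [dist_comm x (φ i z)]; exact add_le_add ha' hz'
              _ = 2 * r := by ring
          have h2 : dist a z < L * dist (φ i a) (φ i z) := by
            have := h1.1
            have hinv : 0 < L⁻¹ := inv_pos.2 hL0
            calc dist a z = L * (L⁻¹ * dist a z) := by field_simp
              _ < L * dist (φ i a) (φ i z) := by
                  exact (mul_lt_mul_iff_right₀ hL0).2 this
          have : dist a z < 4 * r := by nlinarith
          exact Metric.mem_closedBall.2 this.le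
      calc μH[(d:ℝ)] (φ i '' K i ∩ Metric.closedBall x r)
          ≤ μH[(d:ℝ)] (φ i '' S) := measure_mono hsub
        _ ≤ ((2:ℝ≥0):ℝ≥0∞) ^ (d:ℝ) * μH[(d:ℝ)] S :=
            hlip.hausdorffMeasure_image_le (by positivity)
        _ ≤ ((2:ℝ≥0):ℝ≥0∞) ^ (d:ℝ) * μH[(d:ℝ)] (Metric.closedBall z (4 * r)) :=
            mul_le_mul_right (measure_mono hSsub) _
        _ ≤ ((2:ℝ≥0):ℝ≥0∞) ^ (d:ℝ) * ENNReal.ofReal (M * (4 * r) ^ d) :=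
            mul_le_mul_right (hball z (4 * r) (by positivity)) _
        _ = ENNReal.ofReal (c1 * r ^ d) := by
            rw [ENNReal.rpow_natCast]
            have h2 : ((2:ℝ≥0):ℝ≥0∞) ^ d = ENNReal.ofReal (2 ^ d) := by
              rw [ENNReal.ofReal_pow (by norm_num)]
              norm_num
            rw [h2, ← ENNReal.ofReal_mul (by positivity)]
            congr 1
            rw [hc1]; ring
  -- assemble
  have hcover : A ∩ Metric.closedBall x r ⊆
      (A \ ⋃ i, φ i '' K i) ∪ ⋃ i, (φ i '' K i ∩ Metric.closedBall x r) := by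
    rintro y ⟨hyA, hyB⟩
    by_cases h : y ∈ ⋃ i, φ i '' K i
    · rcases mem_iUnion.1 h with ⟨i, hi'⟩
      exact Or.inr (mem_iUnion.2 ⟨i, hi', hyB⟩)
    · exact Or.inl ⟨hyA, h⟩
  have hrd : 0 < r ^ d := by positivity
  calc μH[(d:ℝ)] (A ∩ Metric.closedBall x r)
      ≤ μH[(d:ℝ)] ((A \ ⋃ i, φ i '' K i) ∪ ⋃ i, (φ i '' K i ∩ Metric.closedBall x r)) :=
        measure_mono hcover
    _ ≤ μH[(d:ℝ)] (A \ ⋃ i, φ i '' K i)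
        + μH[(d:ℝ)] (⋃ i, (φ i '' K i ∩ Metric.closedBall x r)) := measure_union_le _ _
    _ ≤ 0 + ∑ i : Fin N, μH[(d:ℝ)] (φ i '' K i ∩ Metric.closedBall x r) := by
        rw [hres]; exact add_le_add le_rfl (measure_iUnion_fintype_le _ _)
    _ ≤ ∑ i : Fin N, ENNReal.ofReal (c1 * r ^ d) := by
        rw [zero_add]; exact Finset.sum_le_sum fun i _ => hi i
    _ = (N : ℝ≥0∞) * ENNReal.ofReal (c1 * r ^ d) := by
        rw [Finset.sum_const, Finset.card_univ, Fintype.card_fin, nsmul_eq_mul]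
    _ = ENNReal.ofReal ((N : ℝ) * (c1 * r ^ d)) := by
        rw [ENNReal.ofReal_mul hc1nn, ← ENNReal.ofReal_natCast N,
          ← ENNReal.ofReal_mul (by positivity), ← ENNReal.ofReal_mul (by positivity),
          mul_assoc]
    _ < ENNReal.ofReal ((N * c1 + 1) * r ^ d) := by
        apply (ENNReal.ofReal_lt_ofReal_iff (by positivity)).2
        nlinarith


end
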